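/- Fix integers n ≥ 2, N ≥ 1, κ ≥ 1, maps f : ℝ^(2n−1) × ℝ → ℝ and ĉ : ℝ × ℝ^(2n−1) → ℝ, a dataset of triples (y_i⁺, ζ_i, u_i) ∈ ℝ × ℝ^(2n−1) × ℝ, i = 1,…,N, δ > 0, and a class-K∞ function γ such that ‖ζ_i⁺ − Φ(ζ, y_i⁺)‖ ≤ γ(‖ζ_i − ζ‖) for every i and every ζ ∈ ℝ^(2n−1). Suppose sets A⁰, …, A^κ ⊆ ℝ^(2n−1) are constructed as: A⁰ = ⋃_{i ∈ I₀} B̄(ζ_i⁺, r⁰_i) with B̄(ζ_i⁺, r⁰_i) ⊆ S_δ for each i ∈ I₀; and for 1 ≤ j ≤ κ, A^j = ⋃_{i ∈ I_j} B̄(ζ_i, γ⁻¹(r^j_i)) with B̄(ζ_i⁺, r^j_i) ⊆ A^{j−1} for each i ∈ I_j, where I₀,…,I_κ ⊆ {1,…,N} and all radii are nonnegative. If ζ₀ ∈ A^κ and A⁰ ⊆ A¹, then there exists a sequence of indices i : {1,2,3,…} → {1,…,N} such that the closed-loop trajectory defined by ζ_t := Φ(ζ_{t−1}, y_{i(t)}⁺)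 for t ≥ 1 satisfies |(ζ_t)ₙ| ≤ δ for all t ≥ κ (practical output regulation with accuracy δ). -/

import Mathlib

/-- The closed-loop one-step map with reference `yr`:
`Φ(ζ, yr) = (y₂,…,yₙ, f(ζ, ĉ(yr, ζ)), u₂,…,u_{n−1}, ĉ(yr, ζ))` for the augmented
state `ζ = (y₁,…,yₙ,u₁,…,u_{n−1}) ∈ ℝ^(2n−1)` (0-indexed coordinates). -/
noncomputable def Phi (n : ℕ) (f : EuclideanSpace ℝ (Fin (2*n-1)) → ℝ → ℝ)
    (chat : ℝ → EuclideanSpace ℝ (Fin (2*n-1)) → ℝ)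
    (ζ : EuclideanSpace ℝ (Fin (2*n-1))) (yr : ℝ) : EuclideanSpace ℝ (Fin (2*n-1)) :=
  WithLp.toLp 2 fun (k : Fin (2*n-1)) =>
    if (k : ℕ) = n - 1 then f ζ (chat yr ζ)
    else if h : (k : ℕ) = 2*n - 2 then chat yr ζ
    else ζ ⟨(k : ℕ) + 1, by have := k.isLt; omega⟩

/-- For a data triple `(y_i⁺, ζ_i, u_i)`, the shifted successor state
`ζ_i⁺ = (y_{i,2},…,y_{i,n}, y_i⁺, u_{i,2},…,u_{i,n−1}, u_i)`. -/
noncomputable def zplus (n : ℕ) (yp : ℝ) (ζ : EuclideanSpace ℝ (Fin (2*n-1))) (ui : ℝ) :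
    EuclideanSpace ℝ (Fin (2*n-1)) :=
  WithLp.toLp 2 fun (k : Fin (2*n-1)) =>
    if (k : ℕ) = n - 1 then yp
    else if h : (k : ℕ) = 2*n - 2 then ui
    else ζ ⟨(k : ℕ) + 1, by have := k.isLt; omega⟩

/-- Backward reachable set `R⁻(A) = {ζ : ∃ i, Φ(ζ, y_i⁺) ∈ A}`. -/
def Rminus (n N : ℕ) (f : EuclideanSpace ℝ (Fin (2*n-1)) → ℝ → ℝ)
    (chat : ℝ → EuclideanSpace ℝ (Fin (2*n-1)) → ℝ) (yd : Fin N → ℝ)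
    (A : Set (EuclideanSpace ℝ (Fin (2*n-1)))) : Set (EuclideanSpace ℝ (Fin (2*n-1))) :=
  {ζ | ∃ i : Fin N, Phi n f chat ζ (yd i) ∈ A}

/-- `S_δ = {ζ : |ζₙ| ≤ δ}` (the n-th coordinate is index `n-1`, 0-indexed). -/
def Sdelta (n : ℕ) (hn : 1 ≤ n) (δ : ℝ) : Set (EuclideanSpace ℝ (Fin (2*n-1))) :=
  {ζ | |ζ ⟨n - 1, by omega⟩| ≤ δ}

/-- Theorem 2: for the explicitly constructed sets
`A⁰, …, A^κ` as in Theorem 1, if `ζ₀ ∈ A^κ` and `A⁰ ⊆ A¹`, then there is an infinite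
sequence of reference indices whose closed-loop trajectory satisfies `|(ζ_t)ₙ| ≤ δ`
for all `t ≥ κ` (practical output regulation with accuracy `δ`). -/
theorem stmt_8 (n N κ : ℕ) (hn : 2 ≤ n) (hN : 1 ≤ N) (hκ : 1 ≤ κ)
    (f : EuclideanSpace ℝ (Fin (2*n-1)) → ℝ → ℝ)
    (chat : ℝ → EuclideanSpace ℝ (Fin (2*n-1)) → ℝ)
    (yd : Fin N → ℝ) (ζd : Fin N → EuclideanSpace ℝ (Fin (2*n-1))) (ud : Fin N → ℝ)
    (δ : ℝ) (hδ : 0 < δ)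
    (γ γinv : ℝ → ℝ)
    (hγ_cont : ContinuousOn γ (Set.Ici (0:ℝ)))
    (hγ_mono : StrictMonoOn γ (Set.Ici (0:ℝ)))
    (hγ_zero : γ 0 = 0)
    (hγ_top : Filter.Tendsto γ Filter.atTop Filter.atTop)
    (hγinv_nonneg : ∀ r, 0 ≤ r → 0 ≤ γinv r)
    (hγinv_right : ∀ r, 0 ≤ r → γ (γinv r) = r)
    (hγinv_left : ∀ s, 0 ≤ s → γinv (γ s) = s)
    (hγ_bound : ∀ (i : Fin N) (ζ : EuclideanSpace ℝ (Fin (2*n-1))),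
      ‖zplus n (yd i) (ζd i) (ud i) - Phi n f chat ζ (yd i)‖ ≤ γ ‖ζd i - ζ‖)
    (A : ℕ → Set (EuclideanSpace ℝ (Fin (2*n-1))))
    (I : ℕ → Set (Fin N)) (r : ℕ → Fin N → ℝ)
    (hr : ∀ j i, 0 ≤ r j i)
    (hA0 : A 0 = ⋃ i ∈ I 0, Metric.closedBall (zplus n (yd i) (ζd i) (ud i)) (r 0 i))
    (hball0 : ∀ i ∈ I 0,
      Metric.closedBall (zplus n (yd i) (ζd i) (ud i)) (r 0 i) ⊆ Sdelta n (by omega) δ)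
    (hAj : ∀ j : ℕ, 1 ≤ j → j ≤ κ →
      A j = ⋃ i ∈ I j, Metric.closedBall (ζd i) (γinv (r j i)))
    (hballj : ∀ j : ℕ, 1 ≤ j → j ≤ κ → ∀ i ∈ I j,
      Metric.closedBall (zplus n (yd i) (ζd i) (ud i)) (r j i) ⊆ A (j - 1))
    (hA01 : A 0 ⊆ A 1) :
    ∀ ζ0 ∈ A κ, ∃ (idx : ℕ → Fin N) (traj : ℕ → EuclideanSpace ℝ (Fin (2*n-1))),
      traj 0 = ζ0 ∧
      (∀ t : ℕ, traj (t+1) = Phi n f chat (traj t) (yd (idx (t+1)))) ∧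
      (∀ t : ℕ, κ ≤ t → |traj t ⟨n - 1, by omega⟩| ≤ δ) := by
  intro ζ0 hζ0
  -- A 0 ⊆ Sdelta
  have hA0S : ∀ ζ ∈ A 0, |ζ ⟨n - 1, by omega⟩| ≤ δ := by
    intro ζ hζ
    rw [hA0] at hζ
    simp only [Set.mem_iUnion] at hζ
    obtain ⟨i, hi, hb⟩ := hζ
    exact hball0 i hi hb
  -- step lemma
  have hstep : ∀ (m : ℕ), m ≤ κ → ∀ ζ ∈ A m,
      ∃ i : Fin N, Phi n f chat ζ (yd i) ∈ A (m - 1) := by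
    intro m hm ζ hζ
    set j := max m 1 with hj
    have hj1 : 1 ≤ j := le_max_right _ _
    have hjκ : j ≤ κ := max_le hm hκ
    have hζj : ζ ∈ A j := by
      rcases Nat.eq_zero_or_pos m with hm0 | hm0
      · have : j = 1 := by omega
        rw [this]
        exact hA01 (hm0 ▸ hζ)
      · have : j = m := by omega
        rw [this]; exact hζ
    rw [hAj j hj1 hjκ] at hζj
    simp only [Set.mem_iUnion] at hζj
    obtain ⟨i, hi, hb⟩ := hζj
    refine ⟨i, ?_⟩
    have hdist : ‖ζd i - ζ‖ ≤ γinv (r j i) := by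
      rw [Metric.mem_closedBall] at hb
      rw [← dist_eq_norm, dist_comm]
      exact hb
    have h1 : γ ‖ζd i - ζ‖ ≤ r j i := by
      have := hγ_mono.monotoneOn (Set.mem_Ici.2 (norm_nonneg _))
        (Set.mem_Ici.2 (hγinv_nonneg _ (hr j i))) hdist
      calc γ ‖ζd i - ζ‖ ≤ γ (γinv (r j i)) := this
        _ = r j i := hγinv_right _ (hr j i)
    have h2 : Phi n f chat ζ (yd i) ∈
        Metric.closedBall (zplus n (yd i) (ζd i) (ud i)) (r j i) := by
      rw [Metric.mem_closedBall, dist_comm, dist_eq_norm]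
      exact le_trans (hγ_bound i ζ) h1
    have h3 := hballj j hj1 hjκ i hi h2
    have : j - 1 = m - 1 := by omega
    rwa [this] at h3
  choose pick hpick using hstep
  -- recursive trajectory
  let T : (t : ℕ) → {ζ : EuclideanSpace ℝ (Fin (2*n-1)) // ζ ∈ A (κ - t)} := fun t =>
    Nat.rec ⟨ζ0, by simpa using hζ0⟩
      (fun t ih => ⟨Phi n f chat ih.1 (yd (pick (κ - t) (Nat.sub_le _ _) ih.1 ih.2)),
        by
          have h := hpick (κ - t) (Nat.sub_le _ _) ih.1 ih.2
          have he : κ - (t + 1) = κ - t - 1 := by omega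
          rwa [he]⟩) t
  refine ⟨fun t => match t with
      | 0 => ⟨0, hN⟩
      | t + 1 => pick (κ - t) (Nat.sub_le _ _) (T t).1 (T t).2,
    fun t => (T t).1, rfl, fun t => rfl, ?_⟩
  intro t ht
  have h := (T t).2
  have h0 : κ - t = 0 := by omega
  exact hA0S _ (by rw [← h0]; exact h)
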